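/- Let Θ ⊂ ℝ^k be compact, (p_n) probability densities on Θ, f : Θ → ℝ bounded continuous nonnegative with f_max = sup f, and L : Θ → ℝ a bounded nonnegative measurable function satisfying c := lim_{δ→0} inf_{θ ∈ Θ_δ} L(θ) > 0, where Θ_δ = {θ : f(θ) ≥ f_max − δ}. If E_n(f) → f_max, then the ratio E_n(L·f)/E_n(L) = (∫_Θ f L p_n dθ)/(∫_Θ L p_n dθ) converges to f_max as n → ∞. -/

import Mathlib

open MeasureTheory Set Filter Topology

/-- Ratio convergence at the maximum: if `E_n(f) → f_max` and the bounded nonnegative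
measurable `L` satisfies `c = lim_{δ→0} inf_{Θ_δ} L > 0`, then
`E_n(L f) / E_n(L) → f_max`. -/
theorem stmt_2 (k : ℕ) (Θ : Set (Fin k → ℝ)) (hΘ : IsCompact Θ)
    (p : ℕ → (Fin k → ℝ) → ℝ)
    (hp0 : ∀ n, ∀ θ ∈ Θ, 0 ≤ p n θ)
    (hpm : ∀ n, Measurable (p n))
    (hp1 : ∀ n, ∫ θ in Θ, p n θ = 1)
    (f : (Fin k → ℝ) → ℝ) (hf : ContinuousOn f Θ)
    (hfb : BddAbove (f '' Θ)) (hf0 : ∀ θ ∈ Θ, 0 ≤ f θ)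
    (fmax : ℝ) (hfmax : fmax = sSup (f '' Θ))
    (L : (Fin k → ℝ) → ℝ) (hLm : Measurable L)
    (hL0 : ∀ θ ∈ Θ, 0 ≤ L θ) (hLb : BddAbove (L '' Θ))
    (c : ℝ) (hc : 0 < c)
    (hclim : Tendsto (fun δ => sInf (L '' {θ ∈ Θ | fmax - δ ≤ f θ}))
      (𝓝[>] (0 : ℝ)) (𝓝 c))
    (hconv : Tendsto (fun n => ∫ θ in Θ, f θ * p n θ) atTop (𝓝 fmax)) :
    Tendsto (fun n => (∫ θ in Θ, f θ * L θ * p n θ) / ∫ θ in Θ, L θ * p n θ)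
      atTop (𝓝 fmax) := by
  have hΘm : MeasurableSet Θ := hΘ.isClosed.measurableSet
  have hne : Θ.Nonempty := by
    rcases Θ.eq_empty_or_nonempty with h | h
    · exfalso
      have h1 := hp1 0
      rw [h] at h1
      simp at h1
    · exact h
  obtain ⟨θ0, hθ0⟩ := hne
  have hPint : ∀ n, IntegrableOn (p n) Θ := by
    intro n
    by_contra h
    have h1 := hp1 n
    rw [integral_undef h] at h1
    norm_num at h1
  have hfle : ∀ θ ∈ Θ, f θ ≤ fmax := fun θ hθ => hfmax ▸ le_csSup hfb ⟨θ, hθ, rfl⟩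
  have hfmax0 : 0 ≤ fmax := le_trans (hf0 θ0 hθ0) (hfle θ0 hθ0)
  set M := sSup (L '' Θ) with hMdef
  have hLle : ∀ θ ∈ Θ, L θ ≤ M := fun θ hθ => le_csSup hLb ⟨θ, hθ, rfl⟩
  have hM0 : 0 ≤ M := le_trans (hL0 θ0 hθ0) (hLle θ0 hθ0)
  have hfm : AEStronglyMeasurable f (volume.restrict Θ) := hf.aestronglyMeasurable hΘm
  have hLsm : AEStronglyMeasurable L (volume.restrict Θ) := hLm.aestronglyMeasurable
  have hfbd : ∀ᵐ θ ∂(volume.restrict Θ), ‖f θ‖ ≤ fmax :=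
    (ae_restrict_iff' hΘm).2 (ae_of_all _ fun θ hθ => by
      rw [Real.norm_eq_abs, abs_of_nonneg (hf0 θ hθ)]; exact hfle θ hθ)
  have hLbd : ∀ᵐ θ ∂(volume.restrict Θ), ‖L θ‖ ≤ M :=
    (ae_restrict_iff' hΘm).2 (ae_of_all _ fun θ hθ => by
      rw [Real.norm_eq_abs, abs_of_nonneg (hL0 θ hθ)]; exact hLle θ hθ)
  have I1 : ∀ n, IntegrableOn (fun θ => f θ * p n θ) Θ :=
    fun n => (hPint n).bdd_mul hfm hfbd
  have I2 : ∀ n, IntegrableOn (fun θ => L θ * p n θ) Θ :=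
    fun n => (hPint n).bdd_mul hLsm hLbd
  have I3 : ∀ n, IntegrableOn (fun θ => f θ * L θ * p n θ) Θ := by
    intro n
    have h := (I2 n).bdd_mul hfm hfbd
    simpa [mul_assoc, IntegrableOn] using h
  set ε : ℕ → ℝ := fun n => fmax - ∫ θ in Θ, f θ * p n θ with hεdef
  have hεlim : Tendsto ε atTop (𝓝 0) := by
    have h := hconv.const_sub fmax
    rw [sub_self] at h
    exact h
  have hε0 : ∀ n, 0 ≤ ε n := by
    intro n
    have hmono : ∫ θ in Θ, f θ * p n θ ≤ ∫ θ in Θ, fmax * p n θ :=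
      setIntegral_mono_on (I1 n) ((hPint n).const_mul fmax) hΘm
        (fun θ hθ => mul_le_mul_of_nonneg_right (hfle θ hθ) (hp0 n θ hθ))
    rw [integral_const_mul, hp1 n, mul_one] at hmono
    simp only [hεdef]
    linarith
  -- choose δ
  obtain ⟨δ, hδS, hδ0⟩ :=
    ((hclim.eventually (eventually_gt_nhds (by linarith : c / 2 < c))).and
      self_mem_nhdsWithin).exists
  have hδ : (0 : ℝ) < δ := hδ0
  have hLS : ∀ θ ∈ Θ, fmax - δ ≤ f θ → c / 2 ≤ L θ := by
    intro θ hθ hfθ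
    refine le_trans hδS.le (csInf_le ?_ ⟨θ, ⟨hθ, hfθ⟩, rfl⟩)
    refine ⟨0, ?_⟩
    rintro y ⟨z, hz, rfl⟩
    exact hL0 z hz.1
  set β := c / (2 * δ) with hβdef
  have hβ : 0 < β := div_pos hc (by linarith)
  have hβδ : β * δ = c / 2 := by
    rw [hβdef]; field_simp
  -- lower bound for the denominator
  have hD : ∀ n, c / 2 - β * ε n ≤ ∫ θ in Θ, L θ * p n θ := by
    intro n
    have hint : IntegrableOn
        (fun θ => (c / 2) * p n θ - β * (fmax * p n θ - f θ * p n θ)) Θ :=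
      ((hPint n).const_mul (c / 2)).sub
        ((((hPint n).const_mul fmax).sub (I1 n)).const_mul β)
    have hmono : ∫ θ in Θ, ((c / 2) * p n θ - β * (fmax * p n θ - f θ * p n θ))
        ≤ ∫ θ in Θ, L θ * p n θ := by
      refine setIntegral_mono_on hint (I2 n) hΘm ?_
      intro θ hθ
      have hx : 0 ≤ fmax - f θ := by have := hfle θ hθ; linarith
      have hpθ : 0 ≤ p n θ := hp0 n θ hθ
      have hLθ : 0 ≤ L θ := hL0 θ hθ
      rcases le_or_gt (fmax - f θ) δ with hcase | hcase
      · have hL2 : c / 2 ≤ L θ := hLS θ hθ (by linarith)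
        have h1 : 0 ≤ β * ((fmax - f θ) * p n θ) := by positivity
        have h2 : (c / 2) * p n θ ≤ L θ * p n θ :=
          mul_le_mul_of_nonneg_right hL2 hpθ
        nlinarith [h1, h2]
      · have h1 : β * δ * p n θ ≤ β * (fmax - f θ) * p n θ :=
          mul_le_mul_of_nonneg_right
            (mul_le_mul_of_nonneg_left hcase.le hβ.le) hpθ
        rw [hβδ] at h1
        nlinarith [mul_nonneg hLθ hpθ, h1]
    have ha1 : Integrable (fun θ => (c / 2) * p n θ) (volume.restrict Θ) :=
      (hPint n).const_mul _
    have ha2 : Integrable (fun θ => fmax * p n θ - f θ * p n θ) (volume.restrict Θ) :=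
      ((hPint n).const_mul fmax).sub (I1 n)
    have ha3 : Integrable (fun θ => β * (fmax * p n θ - f θ * p n θ)) (volume.restrict Θ) :=
      ha2.const_mul β
    have ha4 : Integrable (fun θ => fmax * p n θ) (volume.restrict Θ) :=
      (hPint n).const_mul fmax
    have hcalc : ∫ θ in Θ, ((c / 2) * p n θ - β * (fmax * p n θ - f θ * p n θ))
        = c / 2 - β * ε n := by
      rw [integral_sub ha1 ha3, integral_const_mul, integral_const_mul,
        integral_sub ha4 (I1 n), integral_const_mul, hp1 n]
      simp only [hεdef]
      ring
    linarith [hmono, hcalc.symm.trans_le hmono]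
  -- upper bound for the numerator
  have hNup : ∀ n, ∫ θ in Θ, f θ * L θ * p n θ
      ≤ fmax * ∫ θ in Θ, L θ * p n θ := by
    intro n
    have hmono : ∫ θ in Θ, f θ * L θ * p n θ
        ≤ ∫ θ in Θ, fmax * (L θ * p n θ) := by
      refine setIntegral_mono_on (I3 n) ((I2 n).const_mul fmax) hΘm ?_
      intro θ hθ
      rw [mul_assoc]
      exact mul_le_mul_of_nonneg_right (hfle θ hθ)
        (mul_nonneg (hL0 θ hθ) (hp0 n θ hθ))
    rwa [integral_const_mul] at hmono
  -- lower bound for the numerator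
  have hNlow : ∀ n, fmax * (∫ θ in Θ, L θ * p n θ) - M * ε n
      ≤ ∫ θ in Θ, f θ * L θ * p n θ := by
    intro n
    have hb1 : Integrable (fun θ => fmax * (L θ * p n θ)) (volume.restrict Θ) :=
      (I2 n).const_mul fmax
    have hintL : Integrable
        (fun θ => fmax * (L θ * p n θ) - f θ * L θ * p n θ) (volume.restrict Θ) :=
      hb1.sub (I3 n)
    have hb2 : Integrable (fun θ => fmax * p n θ - f θ * p n θ) (volume.restrict Θ) :=
      ((hPint n).const_mul fmax).sub (I1 n)
    have hintR : Integrable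
        (fun θ => M * (fmax * p n θ - f θ * p n θ)) (volume.restrict Θ) :=
      hb2.const_mul M
    have hb3 : Integrable (fun θ => fmax * p n θ) (volume.restrict Θ) :=
      (hPint n).const_mul fmax
    have hmono : ∫ θ in Θ, (fmax * (L θ * p n θ) - f θ * L θ * p n θ)
        ≤ ∫ θ in Θ, M * (fmax * p n θ - f θ * p n θ) := by
      refine setIntegral_mono_on hintL hintR hΘm ?_
      intro θ hθ
      have hx : 0 ≤ fmax - f θ := by have := hfle θ hθ; linarith
      have hpθ : 0 ≤ p n θ := hp0 n θ hθ
      nlinarith [mul_le_mul_of_nonneg_right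
        (mul_le_mul_of_nonneg_left (hLle θ hθ) hx) hpθ]
    rw [integral_sub hb1 (I3 n), integral_const_mul,
      integral_const_mul, integral_sub hb3 (I1 n),
      integral_const_mul, hp1 n] at hmono
    simp only [hεdef]
    linarith
  -- eventual positivity of the denominator
  have hev : ∀ᶠ n in atTop, ε n < δ / 2 :=
    hεlim.eventually_lt_const (half_pos hδ)
  have hD4 : ∀ᶠ n in atTop, c / 4 ≤ ∫ θ in Θ, L θ * p n θ := by
    filter_upwards [hev] with n hn
    have h1 := hD n
    have h2 : β * ε n ≤ β * (δ / 2) :=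
      mul_le_mul_of_nonneg_left hn.le hβ.le
    nlinarith [hβδ]
  -- squeeze
  have hup : ∀ᶠ n in atTop,
      (∫ θ in Θ, f θ * L θ * p n θ) / (∫ θ in Θ, L θ * p n θ) ≤ fmax := by
    filter_upwards [hD4] with n hn
    have hDpos : (0 : ℝ) < ∫ θ in Θ, L θ * p n θ := by linarith
    rw [div_le_iff₀ hDpos]
    linarith [hNup n]
  have hlow : ∀ᶠ n in atTop, fmax - (4 * M / c) * ε n
      ≤ (∫ θ in Θ, f θ * L θ * p n θ) / (∫ θ in Θ, L θ * p n θ) := by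
    filter_upwards [hD4] with n hn
    have hDpos : (0 : ℝ) < ∫ θ in Θ, L θ * p n θ := by linarith
    rw [le_div_iff₀ hDpos]
    have h1 := hNlow n
    have hq : 0 ≤ 4 * M / c * ε n :=
      mul_nonneg (div_nonneg (by linarith) hc.le) (hε0 n)
    have h2 : (4 * M / c * ε n) * (c / 4) ≤ (4 * M / c * ε n) * (∫ θ in Θ, L θ * p n θ) :=
      mul_le_mul_of_nonneg_left hn hq
    have h3 : (4 * M / c * ε n) * (c / 4) = M * ε n := by
      field_simp
    have h4 : (fmax - 4 * M / c * ε n) * (∫ θ in Θ, L θ * p n θ)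
        = fmax * (∫ θ in Θ, L θ * p n θ)
          - (4 * M / c * ε n) * (∫ θ in Θ, L θ * p n θ) := by ring
    rw [h4]
    have h5 : M * ε n ≤ 4 * M / c * ε n * ∫ θ in Θ, L θ * p n θ := by
      rw [← h3]; exact h2
    exact le_trans (sub_le_sub_left h5 _) h1
  have hg : Tendsto (fun n => fmax - (4 * M / c) * ε n) atTop (𝓝 fmax) := by
    have h := (hεlim.const_mul (4 * M / c)).const_sub fmax
    simpa using h
  exact tendsto_of_tendsto_of_tendsto_of_le_of_le' hg tendsto_const_nhds hlow hup
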